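/- The stabilizer in PGL(4,2) of the twisted cubic C ⊂ PG(3,2) (as a set) has order 48. -/

import Mathlib

open scoped LinearAlgebra.Projectivization

/-- The twisted cubic in `PG(3,2)`. -/
def twistedCubic2 : Set (ℙ (ZMod 2) (Fin 4 → ZMod 2)) :=
  {Projectivization.mk (ZMod 2) ![0, 0, 0, 1] (by decide),
   Projectivization.mk (ZMod 2) ![1, 1, 1, 1] (by decide),
   Projectivization.mk (ZMod 2) ![1, 0, 0, 0] (by decide)}

namespace TC2aux

abbrev V : Type := Fin 4 → ZMod 2
abbrev PP := ℙ (ZMod 2) V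

def w1 : V := ![0,0,0,1]
def w2 : V := ![1,1,1,1]
def w3 : V := ![1,0,0,0]

lemma zmod2_unit (a : (ZMod 2)ˣ) : (a : ZMod 2) = 1 :=
  (by decide : ∀ x : ZMod 2, x ≠ 0 → x = 1) _ a.ne_zero

lemma mk_inj {v w : V} (hv : v ≠ 0) (hw : w ≠ 0) :
    Projectivization.mk (ZMod 2) v hv = Projectivization.mk (ZMod 2) w hw ↔ v = w := by
  rw [Projectivization.mk_eq_mk_iff]
  constructor
  · rintro ⟨a, rfl⟩
    simp [Units.smul_def, zmod2_unit a]
  · rintro rfl; exact ⟨1, one_smul _ _⟩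

lemma rep_mk {v : V} (hv : v ≠ 0) : (Projectivization.mk (ZMod 2) v hv).rep = v :=
  (mk_inj _ hv).mp (Projectivization.mk_rep _)

lemma rep_injective : Function.Injective (Projectivization.rep : PP → V) := by
  intro x y h
  rw [← Projectivization.mk_rep x, ← Projectivization.mk_rep y]
  exact (mk_inj _ _).mpr h

lemma image_rep_triple {a b c : V} (ha : a ≠ 0) (hb : b ≠ 0) (hc : c ≠ 0) :
    Projectivization.rep '' ({Projectivization.mk (ZMod 2) a ha,
      Projectivization.mk (ZMod 2) b hb, Projectivization.mk (ZMod 2) c hc} : Set PP)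
      = {a, b, c} := by
  simp [Set.image_insert_eq, rep_mk]

lemma triple_mk_eq_iff {a b c x y z : V} (ha : a ≠ 0) (hb : b ≠ 0) (hc : c ≠ 0)
    (hx : x ≠ 0) (hy : y ≠ 0) (hz : z ≠ 0) :
    ({Projectivization.mk (ZMod 2) a ha, Projectivization.mk (ZMod 2) b hb,
      Projectivization.mk (ZMod 2) c hc} : Set PP)
      = {Projectivization.mk (ZMod 2) x hx, Projectivization.mk (ZMod 2) y hy,
         Projectivization.mk (ZMod 2) z hz}
      ↔ ({a, b, c} : Set V) = {x, y, z} := by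
  rw [← Set.image_eq_image rep_injective, image_rep_triple ha hb hc,
    image_rep_triple hx hy hz]

def det4 (r0 r1 r2 r3 : V) : ZMod 2 :=
    r0 0 * (r1 1 * (r2 2 * r3 3 - r2 3 * r3 2) - r1 2 * (r2 1 * r3 3 - r2 3 * r3 1) + r1 3 * (r2 1 * r3 2 - r2 2 * r3 1))
  - r0 1 * (r1 0 * (r2 2 * r3 3 - r2 3 * r3 2) - r1 2 * (r2 0 * r3 3 - r2 3 * r3 0) + r1 3 * (r2 0 * r3 2 - r2 2 * r3 0))
  + r0 2 * (r1 0 * (r2 1 * r3 3 - r2 3 * r3 1) - r1 1 * (r2 0 * r3 3 - r2 3 * r3 0) + r1 3 * (r2 0 * r3 1 - r2 1 * r3 0))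
  - r0 3 * (r1 0 * (r2 1 * r3 2 - r2 2 * r3 1) - r1 1 * (r2 0 * r3 2 - r2 2 * r3 0) + r1 2 * (r2 0 * r3 1 - r2 1 * r3 0))

lemma det4_det (N : Matrix (Fin 4) (Fin 4) (ZMod 2)) :
    N.det = det4 (N 0) (N 1) (N 2) (N 3) := by
  simp [Matrix.det_succ_row_zero, Fin.sum_univ_succ, det4, Fin.succAbove,
    show (Fin.succ 2 : Fin 4) = 3 from rfl, show (Fin.castSucc 2 : Fin 4) = 2 from rfl,
    show ((1 : Fin 4) < Fin.succ 2) = True by simp [Fin.lt_def],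
    show (Fin.succ 1 : Fin 4) = 2 from rfl]
  simp only [CharTwo.sub_eq_add]
  ring

def mkM (a c1 c2 b : V) : Matrix (Fin 4) (Fin 4) (ZMod 2) :=
  Matrix.of fun i j => ![a, c1, c2, b] j i

lemma mkM_det (a c1 c2 b : V) : (mkM a c1 c2 b).det = det4 a c1 c2 b := by
  rw [← Matrix.det_transpose, det4_det]
  rfl

lemma cols_det (M : Matrix (Fin 4) (Fin 4) (ZMod 2)) :
    det4 (fun i => M i 0) (fun i => M i 1) (fun i => M i 2) (fun i => M i 3) = M.det := by
  rw [← Matrix.det_transpose M, det4_det]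
  rfl

lemma mulVec_w1 (M : Matrix (Fin 4) (Fin 4) (ZMod 2)) : M.mulVec w1 = fun i => M i 3 := by
  funext i
  simp [Matrix.mulVec, dotProduct, Fin.sum_univ_four, w1, Matrix.vecHead, Matrix.vecTail]

lemma mulVec_w3 (M : Matrix (Fin 4) (Fin 4) (ZMod 2)) : M.mulVec w3 = fun i => M i 0 := by
  funext i
  simp [Matrix.mulVec, dotProduct, Fin.sum_univ_four, w3, Matrix.vecHead, Matrix.vecTail]

lemma mulVec_w2 (M : Matrix (Fin 4) (Fin 4) (ZMod 2)) :
    M.mulVec w2 = fun i => M i 0 + M i 1 + M i 2 + M i 3 := by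
  funext i
  simp [Matrix.mulVec, dotProduct, Fin.sum_univ_four, w2, Matrix.vecHead, Matrix.vecTail,
    add_assoc]

lemma mkM_injective :
    Function.Injective (fun p : V × V × V × V => mkM p.1 p.2.1 p.2.2.1 p.2.2.2) := by
  rintro ⟨a, c1, c2, b⟩ ⟨a', c1', c2', b'⟩ h
  simp only [Prod.mk.injEq]
  exact ⟨funext fun i => congrFun (congrFun h i) 0, funext fun i => congrFun (congrFun h i) 1,
    funext fun i => congrFun (congrFun h i) 2, funext fun i => congrFun (congrFun h i) 3⟩

def Sf : Finset V := {w1, w2, w3}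

def TF : Finset (V × V × V × V) :=
  (Sf ×ˢ (Finset.univ : Finset V) ×ˢ (Finset.univ : Finset V) ×ˢ Sf).filter
    (fun p => det4 p.1 p.2.1 p.2.2.1 p.2.2.2 = 1 ∧
      ({p.2.2.2, p.1 + p.2.1 + p.2.2.1 + p.2.2.2, p.1} : Finset V) = Sf)

set_option maxRecDepth 100000 in
set_option maxHeartbeats 4000000 in
lemma TF_card : TF.card = 48 := by decide

end TC2aux

open TC2aux

/-- The setwise stabilizer of the twisted cubic `C ⊂ PG(3,2)` in the group of
projectivities of `PG(3,2)` (maps of points induced by invertible linear maps of `F₂⁴`)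
has order `48`. -/
theorem twistedCubic2_stabilizer_card :
    {f : ℙ (ZMod 2) (Fin 4 → ZMod 2) → ℙ (ZMod 2) (Fin 4 → ZMod 2) |
        (∃ g : (Fin 4 → ZMod 2) ≃ₗ[ZMod 2] (Fin 4 → ZMod 2),
          f = Projectivization.map (g : (Fin 4 → ZMod 2) →ₗ[ZMod 2] (Fin 4 → ZMod 2))
            g.injective) ∧ f '' twistedCubic2 = twistedCubic2}.ncard = 48 := by
  classical
  have hw1 : (w1 : V) ≠ 0 := by decide
  have hw2 : (w2 : V) ≠ 0 := by decide
  have hw3 : (w3 : V) ≠ 0 := by decide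
  have hC : twistedCubic2 = {Projectivization.mk (ZMod 2) w1 hw1,
      Projectivization.mk (ZMod 2) w2 hw2, Projectivization.mk (ZMod 2) w3 hw3} := rfl
  -- condition on projectivities translated to vectors
  have cond_iff : ∀ g : V ≃ₗ[ZMod 2] V,
      (Projectivization.map (g : V →ₗ[ZMod 2] V) g.injective '' twistedCubic2 = twistedCubic2)
      ↔ ({g w1, g w2, g w3} : Set V) = {w1, w2, w3} := by
    intro g
    have h1 : g w1 ≠ 0 := fun h => hw1 (g.map_eq_zero_iff.mp h)
    have h2 : g w2 ≠ 0 := fun h => hw2 (g.map_eq_zero_iff.mp h)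
    have h3 : g w3 ≠ 0 := fun h => hw3 (g.map_eq_zero_iff.mp h)
    have himg : Projectivization.map (g : V →ₗ[ZMod 2] V) g.injective '' twistedCubic2
        = {Projectivization.mk (ZMod 2) (g w1) h1, Projectivization.mk (ZMod 2) (g w2) h2,
           Projectivization.mk (ZMod 2) (g w3) h3} := by
      rw [hC]
      simp only [Set.image_insert_eq, Set.image_singleton, Projectivization.map_mk]
      rfl
    rw [himg, hC, triple_mk_eq_iff h1 h2 h3 hw1 hw2 hw3]
  -- the stabilizer set as an image
  have hset : {f : PP → PP |
        (∃ g : V ≃ₗ[ZMod 2] V,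
          f = Projectivization.map (g : V →ₗ[ZMod 2] V) g.injective)
          ∧ f '' twistedCubic2 = twistedCubic2}
      = (fun g : V ≃ₗ[ZMod 2] V =>
          Projectivization.map (g : V →ₗ[ZMod 2] V) g.injective) ''
        {g : V ≃ₗ[ZMod 2] V | ({g w1, g w2, g w3} : Set V) = {w1, w2, w3}} := by
    ext f
    simp only [Set.mem_setOf_eq, Set.mem_image]
    constructor
    · rintro ⟨⟨g, rfl⟩, himg⟩
      exact ⟨g, (cond_iff g).mp himg, rfl⟩
    · rintro ⟨g, hg, rfl⟩
      exact ⟨⟨g, rfl⟩, (cond_iff g).mpr hg⟩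
  have Φinj : Function.Injective (fun g : V ≃ₗ[ZMod 2] V =>
      Projectivization.map (g : V →ₗ[ZMod 2] V) g.injective) := by
    intro g g' h
    apply LinearEquiv.ext; intro v
    by_cases hv : v = 0
    · subst hv; simp
    · have h' := congrFun h (Projectivization.mk (ZMod 2) v hv)
      simp only [Projectivization.map_mk] at h'
      exact (mk_inj _ _).mp h'
  have Θinj : Function.Injective (fun g : V ≃ₗ[ZMod 2] V =>
      LinearMap.toMatrix' (g : V →ₗ[ZMod 2] V)) := fun g g' h =>
    LinearEquiv.toLinearMap_injective (LinearMap.toMatrix'.injective h)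
  -- transfer to matrices
  have hΘim : (fun g : V ≃ₗ[ZMod 2] V => LinearMap.toMatrix' (g : V →ₗ[ZMod 2] V)) ''
      {g : V ≃ₗ[ZMod 2] V | ({g w1, g w2, g w3} : Set V) = {w1, w2, w3}}
      = {M : Matrix (Fin 4) (Fin 4) (ZMod 2) | M.det = 1 ∧
          ({M.mulVec w1, M.mulVec w2, M.mulVec w3} : Set V) = {w1, w2, w3}} := by
    ext M
    simp only [Set.mem_image, Set.mem_setOf_eq]
    constructor
    · rintro ⟨g, hg, rfl⟩
      have hmv : ∀ x, (LinearMap.toMatrix' (g : V →ₗ[ZMod 2] V)).mulVec x = g x := by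
        intro x
        rw [← Matrix.toLin'_apply, Matrix.toLin'_toMatrix']
        rfl
      refine ⟨?_, by simp only [hmv]; exact hg⟩
      have hu : IsUnit (LinearMap.toMatrix' (g : V →ₗ[ZMod 2] V)) := by
        refine ⟨⟨_, LinearMap.toMatrix' (g.symm : V →ₗ[ZMod 2] V), ?_, ?_⟩, rfl⟩
        · rw [← LinearMap.toMatrix'_comp]
          rw [show (g : V →ₗ[ZMod 2] V) ∘ₗ (g.symm : V →ₗ[ZMod 2] V) = LinearMap.id by
            ext v; simp]
          exact LinearMap.toMatrix'_id
        · rw [← LinearMap.toMatrix'_comp]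
          rw [show (g.symm : V →ₗ[ZMod 2] V) ∘ₗ (g : V →ₗ[ZMod 2] V) = LinearMap.id by
            ext v; simp]
          exact LinearMap.toMatrix'_id
      rcases (Matrix.isUnit_iff_isUnit_det _).mp hu with ⟨u, hu'⟩
      rw [← hu', zmod2_unit u]
    · rintro ⟨hdet, hst⟩
      have hu : IsUnit M.det := by rw [hdet]; exact isUnit_one
      have hI : Invertible M := M.invertibleOfIsUnitDet hu
      have hcoe : ((M.toLinearEquiv' hI : V ≃ₗ[ZMod 2] V) : V →ₗ[ZMod 2] V)
          = Matrix.toLin' M := Matrix.toLinearEquiv'_apply M hI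
      have hmv : ∀ x, (M.toLinearEquiv' hI) x = M.mulVec x := by
        intro x
        have h := DFunLike.congr_fun hcoe x
        rw [Matrix.toLin'_apply] at h
        exact h
      refine ⟨M.toLinearEquiv' hI, ?_, ?_⟩
      · simp only [Set.mem_setOf_eq, hmv]; exact hst
      · rw [hcoe, LinearMap.toMatrix'_toLin']
  -- transfer to tuples
  have hφim : {M : Matrix (Fin 4) (Fin 4) (ZMod 2) | M.det = 1 ∧
          ({M.mulVec w1, M.mulVec w2, M.mulVec w3} : Set V) = {w1, w2, w3}}
      = (fun p : V × V × V × V => mkM p.1 p.2.1 p.2.2.1 p.2.2.2) '' ↑TF := by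
    ext M
    simp only [Set.mem_setOf_eq, Set.mem_image, Finset.mem_coe]
    constructor
    · rintro ⟨hdet, hst⟩
      have hM : mkM (fun i => M i 0) (fun i => M i 1) (fun i => M i 2) (fun i => M i 3) = M := by
        ext i j; fin_cases j <;> rfl
      refine ⟨(fun i => M i 0, fun i => M i 1, fun i => M i 2, fun i => M i 3), ?_, hM⟩
      have hm3 : M.mulVec w3 ∈ ({w1, w2, w3} : Set V) := by
        rw [← hst]; simp
      have hm1 : M.mulVec w1 ∈ ({w1, w2, w3} : Set V) := by
        rw [← hst]; simp
      rw [TF, Finset.mem_filter]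
      refine ⟨?_, ?_, ?_⟩
      · simp only [Finset.mem_product]
        refine ⟨?_, Finset.mem_univ _, Finset.mem_univ _, ?_⟩
        · rw [← mulVec_w3]
          simpa [Sf] using hm3
        · rw [← mulVec_w1]
          simpa [Sf] using hm1
      · rw [cols_det, hdet]
      · apply Finset.coe_injective
        have h2 : (fun i => M i 0) + (fun i => M i 1) + (fun i => M i 2) + (fun i => M i 3)
            = M.mulVec w2 := by rw [mulVec_w2]; rfl
        simp only [Finset.coe_insert, Finset.coe_singleton, Sf]
        rw [h2, show (fun i => M i 3) = M.mulVec w1 from (mulVec_w1 M).symm,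
          show (fun i => M i 0) = M.mulVec w3 from (mulVec_w3 M).symm]
        exact hst
    · rintro ⟨⟨a, c1, c2, b⟩, hp, rfl⟩
      rw [TF, Finset.mem_filter] at hp
      obtain ⟨-, hdet4, hfe⟩ := hp
      have e1 : (mkM a c1 c2 b).mulVec w1 = b := by rw [mulVec_w1]; rfl
      have e3 : (mkM a c1 c2 b).mulVec w3 = a := by rw [mulVec_w3]; rfl
      have e2 : (mkM a c1 c2 b).mulVec w2 = a + c1 + c2 + b := by rw [mulVec_w2]; rfl
      refine ⟨by rw [mkM_det]; exact hdet4, ?_⟩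
      have hse := congrArg (fun s : Finset V => (↑s : Set V)) hfe
      simp only [Finset.coe_insert, Finset.coe_singleton, Sf] at hse
      rw [e1, e2, e3]
      exact hse
  rw [hset, Set.ncard_image_of_injective _ Φinj,
    ← Set.ncard_image_of_injective _ Θinj, hΘim, hφim,
    Set.ncard_image_of_injective _ mkM_injective, Set.ncard_coe_finset, TF_card]
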